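/- Let L₁, …, L_N : ℝ^m → ℝ be affine functions and let Δ = {x ∈ ℝ^m : L_s(x) ≥ 0 for all s = 1, …, N}. If Δ is nonempty and compact, then there exist real numbers w₁, …, w_N, all strictly positive, such that the affine function Σ_{s=1}^N w_s L_s is constant on ℝ^m. -/
import Mathlib

/-- If the polytope `Δ = {x ∈ ℝ^m | L_s(x) ≥ 0, s = 1, …, N}` cut out by affine
functions `L_s` is nonempty and compact, then there are strictly positive weights
`w_s` such that `Σ_s w_s L_s` is a constant affine function on `ℝ^m`. -/
theorem stmt10 (m N : ℕ) (L : Fin N → ((Fin m → ℝ) →ᵃ[ℝ] ℝ))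
    (hne : ({x : Fin m → ℝ | ∀ s, 0 ≤ L s x}).Nonempty)
    (hcomp : IsCompact {x : Fin m → ℝ | ∀ s, 0 ≤ L s x}) :
    ∃ w : Fin N → ℝ, (∀ s, 0 < w s) ∧
      ∃ c : ℝ, ∀ x : Fin m → ℝ, ∑ s, w s * L s x = c := by
  classical
  obtain ⟨x₀, hx₀⟩ := hne
  -- the coefficient vectors of the linear parts
  set A : Fin N → (Fin m → ℝ) :=
    fun s i => (L s).linear (fun j => if i = j then 1 else 0) with hA
  -- linear part applied to a vector
  have hlin : ∀ s (v : Fin m → ℝ), (L s).linear v = ∑ i, v i * A s i := by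
    intro s v
    conv_lhs => rw [pi_eq_sum_univ v, map_sum]
    simp only [map_smul, smul_eq_mul, hA]
  -- Step 1: recession cone is trivial
  have hrec : ∀ v : Fin m → ℝ, (∀ s, 0 ≤ (L s).linear v) → v = 0 := by
    intro v hv
    obtain ⟨C, hC⟩ := isBounded_iff_forall_norm_le.mp hcomp.isBounded
    by_contra hv0
    have hnv : 0 < ‖v‖ := norm_pos_iff.mpr hv0
    set t : ℝ := (C + ‖x₀‖ + 1) / ‖v‖ with ht
    have htpos : 0 ≤ t := by
      have hC0 : 0 ≤ C + ‖x₀‖ := by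
        have h1 := hC x₀ hx₀
        have h2 := norm_nonneg x₀
        linarith
      positivity
    have hmem : x₀ + t • v ∈ {x : Fin m → ℝ | ∀ s, 0 ≤ L s x} := by
      intro s
      have : L s (x₀ + t • v) = (L s).linear (t • v) + L s x₀ := by
        have := (L s).map_vadd x₀ (t • v)
        simpa [vadd_eq_add, add_comm] using this
      rw [this]
      have : 0 ≤ (L s).linear (t • v) := by
        rw [map_smul]
        exact mul_nonneg htpos (hv s)
      have := hx₀ s
      linarith [hx₀ s, this]
    have h1 : ‖x₀ + t • v‖ ≤ C := hC _ hmem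
    have h2 : ‖t • v‖ ≤ C + ‖x₀‖ := by
      have : ‖t • v‖ = ‖(x₀ + t • v) - x₀‖ := by ring_nf
      rw [this]
      calc ‖(x₀ + t • v) - x₀‖ ≤ ‖x₀ + t • v‖ + ‖x₀‖ := norm_sub_le _ _
        _ ≤ C + ‖x₀‖ := by linarith
    rw [norm_smul, Real.norm_eq_abs, abs_of_nonneg htpos, ht,
      div_mul_cancel₀ _ (ne_of_gt hnv)] at h2
    linarith
  -- the cone generated by the A s
  set K : Set (Fin m → ℝ) :=
    {y | ∃ lam : Fin N → ℝ, (∀ s, 0 ≤ lam s) ∧ ∑ s, lam s • A s = y} with hK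
  have h0K : (0 : Fin m → ℝ) ∈ K := ⟨0, fun s => le_refl 0, by simp⟩
  have hKsmul : ∀ (t : ℝ), 0 ≤ t → ∀ y ∈ K, t • y ∈ K := by
    rintro t ht y ⟨lam, hlam, rfl⟩
    exact ⟨fun s => t * lam s, fun s => mul_nonneg ht (hlam s), by
      rw [Finset.smul_sum]; simp [smul_smul]⟩
  have hKconv : Convex ℝ K := by
    rintro y ⟨lam, hlam, rfl⟩ z ⟨mu, hmu, rfl⟩ a b ha hb hab
    refine ⟨fun s => a * lam s + b * mu s,
      fun s => add_nonneg (mul_nonneg ha (hlam s)) (mul_nonneg hb (hmu s)), ?_⟩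
    rw [Finset.smul_sum, Finset.smul_sum, ← Finset.sum_add_distrib]
    exact Finset.sum_congr rfl fun s _ => by rw [add_smul, smul_smul, smul_smul]
  -- Step 2: K is dense
  have hKdense : closure K = Set.univ := by
    by_contra hKd
    obtain ⟨p, hp⟩ : ∃ p : Fin m → ℝ, p ∉ closure K := by
      by_contra h
      push_neg at h
      exact hKd (Set.eq_univ_of_forall h)
    obtain ⟨f, u, hfu, hup⟩ :=
      geometric_hahn_banach_closed_point (hKconv.closure) isClosed_closure hp
    have hu0 : 0 < u := by simpa using hfu 0 (subset_closure h0K)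
    -- f is nonpositive on A s
    have hfA : ∀ s, f (A s) ≤ 0 := by
      intro s
      by_contra hfs
      push_neg at hfs
      set t : ℝ := (u + 1) / f (A s) with htdef
      have ht : 0 ≤ t := le_of_lt (div_pos (by linarith) hfs)
      have hAsK : A s ∈ K := by
        refine ⟨fun r => if r = s then 1 else 0, fun r => by positivity, ?_⟩
        simp [ite_smul]
      have : t • A s ∈ K := hKsmul t ht (A s) hAsK
      have := hfu _ (subset_closure this)
      rw [map_smul, smul_eq_mul, htdef, div_mul_cancel₀ _ (ne_of_gt hfs)] at this
      linarith
    -- build the recession direction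
    set v : Fin m → ℝ := fun i => -f (fun j => if i = j then 1 else 0) with hv
    have hv0 : v = 0 := by
      apply hrec
      intro s
      rw [hlin]
      have : f (A s) = ∑ i, A s i * f (fun j => if i = j then 1 else 0) := by
        conv_lhs => rw [pi_eq_sum_univ (A s), map_sum]
        simp only [map_smul, smul_eq_mul]
      have h2 : ∑ i, v i * A s i = -f (A s) := by
        rw [this, ← Finset.sum_neg_distrib]
        congr 1; ext i; simp [v]; ring
      rw [h2]
      linarith [hfA s]
    have hf0 : ∀ i, f (fun j => if i = j then 1 else 0) = 0 := by
      intro i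
      have := congrFun hv0 i
      simp [v] at this
      linarith [this]
    have : f p = 0 := by
      conv_lhs => rw [pi_eq_sum_univ p, map_sum]
      simp only [map_smul, smul_eq_mul, hf0, mul_zero]
      simp
    linarith
  -- Step 3: K = univ
  have hKuniv : K = Set.univ := by
    have hspan : affineSpan ℝ K = ⊤ := by
      have hcl : closure K ⊆ (affineSpan ℝ K : Set (Fin m → ℝ)) := by
        apply closure_minimal (subset_affineSpan ℝ K)
        exact (affineSpan ℝ K).closed_of_finiteDimensional
      rw [hKdense] at hcl
      exact eq_top_iff.mpr fun p _ => hcl (Set.mem_univ p)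
    have hint : (interior K).Nonempty :=
      (hKconv.interior_nonempty_iff_affineSpan_eq_top).mpr hspan
    obtain ⟨x, hx⟩ := hint
    apply Set.eq_univ_of_forall
    intro p
    have hq : (2 : ℝ) • p - x ∈ closure K := by rw [hKdense]; trivial
    have : (1/2 : ℝ) • x + (1/2 : ℝ) • ((2:ℝ) • p - x) ∈ interior K :=
      hKconv.combo_interior_closure_mem_interior hx hq (by norm_num) (by norm_num)
        (by norm_num)
    have heq : (1/2 : ℝ) • x + (1/2 : ℝ) • ((2:ℝ) • p - x) = p := by
      ext i; simp; ring
    rw [heq] at this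
    exact interior_subset this
  -- Step 4: extract the weights
  have : -∑ s, A s ∈ K := hKuniv ▸ Set.mem_univ _
  obtain ⟨lam, hlam, hsum⟩ := this
  refine ⟨fun s => lam s + 1,
    fun s => by have := hlam s; show (0:ℝ) < lam s + 1; linarith,
    ∑ s, (lam s + 1) * L s 0, ?_⟩
  intro x
  have hzero : ∑ s, (lam s + 1) • A s = 0 := by
    have : ∑ s, (lam s + 1) • A s = ∑ s, lam s • A s + ∑ s, A s := by
      rw [← Finset.sum_add_distrib]
      exact Finset.sum_congr rfl fun s _ => by rw [add_smul, one_smul]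
    rw [this, hsum]; simp
  have hdec : ∀ s, L s x = (L s).linear x + L s 0 := by
    intro s
    have := (L s).map_vadd (0 : Fin m → ℝ) x
    simpa [vadd_eq_add] using this
  calc ∑ s, (lam s + 1) * L s x
      = ∑ s, ((lam s + 1) * (L s).linear x + (lam s + 1) * L s 0) := by
        apply Finset.sum_congr rfl; intro s _; rw [hdec s]; ring
    _ = (∑ s, (lam s + 1) * (L s).linear x) + ∑ s, (lam s + 1) * L s 0 :=
        Finset.sum_add_distrib
    _ = ∑ s, (lam s + 1) * L s 0 := by
        have : ∑ s, (lam s + 1) * (L s).linear x = 0 := by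
          have h1 : ∀ s, (lam s + 1) * (L s).linear x
              = ∑ i, x i * ((lam s + 1) * A s i) := by
            intro s; rw [hlin]; rw [Finset.mul_sum]
            apply Finset.sum_congr rfl; intro i _; ring
          rw [Finset.sum_congr rfl fun s _ => h1 s, Finset.sum_comm]
          apply Finset.sum_eq_zero
          intro i _
          have := congrFun hzero i
          simp only [Finset.sum_apply, Pi.smul_apply, smul_eq_mul, Pi.zero_apply] at this
          rw [← Finset.mul_sum, this, mul_zero]
        rw [this, zero_add]
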